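/- For every k ≥ 1, the diameter of the k-th Apollonian network satisfies diam(G_k) = ⌈(2k - 1)/3⌉. -/

import Mathlib

/-- A family of Apollonian networks, given by a vertex set `Vert` together with a
generation labeling `gen` and an adjacency relation `adj`, satisfying the recursive
construction: the first generation `U₁` consists of three pairwise adjacent vertices
(forming `G₁`); and for each `k ≥ 1`, for each vertex `u` of generation `k` and each
adjacent pair `{x, y}` of neighbors of `u` in `G_k`, exactly one new vertex of
generation `k + 1` is created, adjacent to exactly `u`, `x`, and `y`.
The `k`-th Apollonian network `G_k` is the induced subgraph on the vertices of
generation at most `k`. -/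
structure ApollonianNetwork where
  Vert : Type
  adj : Vert → Vert → Prop
  adj_symm : ∀ a b, adj a b → adj b a
  adj_irrefl : ∀ a, ¬ adj a a
  gen : Vert → ℕ
  gen_pos : ∀ v, 1 ≤ gen v
  /-- The first generation consists of exactly three vertices. -/
  U1_card : ∃ a b c : Vert, a ≠ b ∧ a ≠ c ∧ b ≠ c ∧ {v | gen v = 1} = {a, b, c}
  /-- `G₁` is a complete graph on the first generation. -/
  U1_complete : ∀ a b, gen a = 1 → gen b = 1 → a ≠ b → adj a b
  /-- All edges join vertices of distinct generations, except within generation 1. -/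
  adj_gen : ∀ a b, adj a b → gen a = gen b → gen a = 1
  /-- Every vertex `v` of generation `k ≥ 2` is adjacent, among the vertices of earlier
  generations, to exactly three vertices `u`, `x`, `y`, where `u` has generation `k - 1`
  and `x`, `y` are neighbors of `u` in `G_{k-1}` that are adjacent to each other. -/
  created : ∀ v, 2 ≤ gen v → ∃ u x y,
    gen u = gen v - 1 ∧ gen x ≤ gen v - 1 ∧ gen y ≤ gen v - 1 ∧
    adj u x ∧ adj u y ∧ adj x y ∧
    {w | adj v w ∧ gen w < gen v} = {u, x, y}
  /-- For each `k ≥ 1`, each vertex `u` of generation `k`, and each adjacent pair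
  `{x, y}` of neighbors of `u` in `G_k`, there is exactly one vertex of generation
  `k + 1` whose neighbors in `G_{k+1}` are exactly `u`, `x`, and `y`. -/
  attach : ∀ k, 1 ≤ k → ∀ u x y,
    gen u = k → gen x ≤ k → gen y ≤ k → x ≠ y →
    adj u x → adj u y → adj x y →
    ∃! v, gen v = k + 1 ∧ {w | adj v w ∧ gen w ≤ k} = ({u, x, y} : Set Vert)

/-- The `k`-th Apollonian network `G_k`: the induced subgraph on the vertices of
generation at most `k`. -/
def ApollonianNetwork.G (A : ApollonianNetwork) (k : ℕ) :
    SimpleGraph {v : A.Vert // A.gen v ≤ k} where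
  Adj a b := A.adj a b
  symm := ⟨fun a b h => A.adj_symm a b h⟩
  loopless := ⟨fun a h => A.adj_irrefl a h⟩

namespace ApollonianNetwork

variable (A : ApollonianNetwork)

/-- The ambient graph on all vertices. -/
def Amb : SimpleGraph A.Vert where
  Adj := A.adj
  symm := ⟨fun a b h => A.adj_symm a b h⟩
  loopless := ⟨fun a h => A.adj_irrefl a h⟩

/-- Lower neighborhood. -/
def low (v : A.Vert) : Set A.Vert := {w | A.adj v w ∧ A.gen w < A.gen v}

lemma mem_low {v w : A.Vert} : w ∈ A.low v ↔ A.adj v w ∧ A.gen w < A.gen v := Iff.rfl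

lemma created' (v : A.Vert) (h : 2 ≤ A.gen v) : ∃ u x y,
    A.gen u = A.gen v - 1 ∧ A.gen x ≤ A.gen v - 1 ∧ A.gen y ≤ A.gen v - 1 ∧
    A.adj u x ∧ A.adj u y ∧ A.adj x y ∧ A.low v = {u, x, y} :=
  A.created v h

/-- adjacent vertices with `gen x ≤ gen u`, `2 ≤ gen u` have `gen x < gen u`. -/
lemma lt_of_adj_le {u x : A.Vert} (h : A.adj u x) (hle : A.gen x ≤ A.gen u)
    (h2 : 2 ≤ A.gen u) : A.gen x < A.gen u := by
  rcases lt_or_eq_of_le hle with h' | h'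
  · exact h'
  · exact absurd (A.adj_gen u x h h'.symm) (by omega)

/-- `In F z`: `z` lies strictly inside the triangle `F`. -/
inductive In (F : Set A.Vert) : A.Vert → Prop
  | base (z : A.Vert) (h : A.low z = F) : In F z
  | step (z w : A.Vert) (hwl : w ∈ A.low z) (hwIn : In F w)
      (hall : ∀ w', w' ∈ A.low z → w' ∉ F → In F w') : In F z

variable {A}

lemma In.gen_lt {F : Set A.Vert} {z : A.Vert} (h : A.In F z) :
    ∀ f ∈ F, A.gen f < A.gen z := by
  induction h with
  | base z h => intro f hf; rw [← h] at hf; exact hf.2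
  | step z w hwl hwIn hall ih ih2 => intro f hf; exact lt_trans (ih f hf) hwl.2

lemma In.not_mem {F : Set A.Vert} {z : A.Vert} (h : A.In F z) : z ∉ F :=
  fun hz => lt_irrefl _ (h.gen_lt z hz)

lemma In.two_le {F : Set A.Vert} {z : A.Vert} (h : A.In F z) (hF : F.Nonempty) :
    2 ≤ A.gen z := by
  obtain ⟨f, hf⟩ := hF
  have := h.gen_lt f hf
  have := A.gen_pos f
  omega

lemma In.low_subset {F : Set A.Vert} {z : A.Vert} (h : A.In F z) :
    ∀ w ∈ A.low z, w ∈ F ∨ A.In F w := by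
  cases h with
  | base z h => intro w hw; rw [h] at hw; exact Or.inl hw
  | step z w hwl hwIn hall =>
      intro w' hw'
      by_cases hwF : w' ∈ F
      · exact Or.inl hwF
      · exact Or.inr (hall w' hw' hwF)

lemma In.absorb {F : Set A.Vert} (hF : F.Nonempty) :
    ∀ n (z' : A.Vert), A.gen z' = n → ∀ z, A.In F z → A.adj z' z →
      A.gen z < A.gen z' → A.In F z' := by
  intro n
  induction n using Nat.strong_induction_on with
  | _ n ih =>
    intro z' hn z hz hadj hlt
    have hz2 : 2 ≤ A.gen z := hz.two_le hF
    have hz'3 : 3 ≤ A.gen z' := by omega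
    obtain ⟨u, x, y, hu, hx, hy, hux, huy, hxy, hlow⟩ := A.created' z' (by omega)
    have hxu : A.gen x < A.gen u := A.lt_of_adj_le hux (by omega) (by omega)
    have hyu : A.gen y < A.gen u := A.lt_of_adj_le huy (by omega) (by omega)
    have hzmem : z ∈ A.low z' := ⟨hadj, hlt⟩
    rw [hlow] at hzmem
    have hzlow : z ∈ A.low z' := by rw [hlow]; exact hzmem
    -- helper to build the step
    have main : ∀ w', w' ∈ A.low z' → w' ∉ F → A.In F w' → True := fun _ _ _ _ => trivial
    rcases hzmem with rfl | rfl | rfl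
    · -- z = u
      refine In.step z' z hzlow hz ?_
      intro w' hw' hw'F
      rw [hlow] at hw'
      rcases hw' with rfl | rfl | rfl
      · exact hz
      · rcases hz.low_subset w' ⟨hux, hxu⟩ with h | h
        · exact absurd h hw'F
        · exact h
      · rcases hz.low_subset w' ⟨huy, hyu⟩ with h | h
        · exact absurd h hw'F
        · exact h
    · -- z = x
      have huIn : A.In F u := ih (A.gen u) (by omega) u rfl z hz hux hxu
      refine In.step z' z hzlow hz ?_
      intro w' hw' hw'F
      rw [hlow] at hw'
      rcases hw' with rfl | rfl | rfl
      · exact huIn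
      · exact hz
      · rcases huIn.low_subset w' ⟨huy, hyu⟩ with h | h
        · exact absurd h hw'F
        · exact h
    · -- z = y
      have huIn : A.In F u := ih (A.gen u) (by omega) u rfl z hz huy hyu
      refine In.step z' z hzlow hz ?_
      intro w' hw' hw'F
      rw [hlow] at hw'
      rcases hw' with rfl | rfl | rfl
      · exact huIn
      · rcases huIn.low_subset w' ⟨hux, hxu⟩ with h | h
        · exact absurd h hw'F
        · exact h
      · exact hz

lemma In.stay {F : Set A.Vert} (hF : F.Nonempty) {z w : A.Vert}
    (hz : A.In F z) (hadj : A.adj z w) (hw : w ∉ F) : A.In F w := by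
  rcases lt_trichotomy (A.gen w) (A.gen z) with h | h | h
  · rcases hz.low_subset w ⟨hadj, h⟩ with h' | h'
    · exact absurd h' hw
    · exact h'
  · have := A.adj_gen z w hadj h.symm
    have := hz.two_le hF
    omega
  · exact In.absorb hF (A.gen w) w rfl z hz (A.adj_symm _ _ hadj) h

lemma In.cross {F : Set A.Vert} (hF : F.Nonempty) {v w : A.Vert}
    (W : A.Amb.Walk v w) : A.In F v → ¬ A.In F w → ∃ s ∈ F, s ∈ W.support := by
  induction W with
  | nil => intro h1 h2; exact absurd h1 h2
  | @cons v v1 w h p ih =>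
      intro h1 h2
      by_cases hv1 : v1 ∈ F
      · exact ⟨v1, hv1, by simp [SimpleGraph.Walk.support_cons,
          SimpleGraph.Walk.start_mem_support]⟩
      · obtain ⟨s, hs, hsup⟩ := ih (h1.stay hF h hv1) h2
        exact ⟨s, hs, by simp [SimpleGraph.Walk.support_cons, hsup]⟩

/-- Main crossing-length lower bound. -/
lemma cross_length {F F' : Set A.Vert} (hF : F.Nonempty) (hF' : F'.Nonempty)
    (h1 : ∀ z, A.In F z → ¬ A.In F' z)
    (h2 : ∀ s ∈ F, ¬ A.In F' s)
    {δ : ℕ} (hδ : ∀ s ∈ F, ∀ t ∈ F', ∀ W : A.Amb.Walk s t, δ ≤ W.length)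
    {v w : A.Vert} (hv : A.In F v) (hw : A.In F' w)
    (W : A.Amb.Walk v w) : δ + 2 ≤ W.length := by
  classical
  have hwF : ¬ A.In F w := fun h => h1 w h hw
  obtain ⟨s, hsF, hsup⟩ := In.cross hF W hv hwF
  set W1 := W.takeUntil s hsup with hW1
  set W2 := W.dropUntil s hsup with hW2
  have hsplit : W1.length + W2.length = W.length := by
    rw [hW1, hW2, ← SimpleGraph.Walk.length_append, SimpleGraph.Walk.take_spec]
  have hW1pos : 1 ≤ W1.length := by
    by_contra h
    have : W1.length = 0 := by omega
    have := SimpleGraph.Walk.eq_of_length_eq_zero this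
    subst this
    exact hv.not_mem hsF
  -- second crossing
  have hsF' : ¬ A.In F' s := h2 s hsF
  obtain ⟨t, htF', htsup⟩ := In.cross hF' W2.reverse hw hsF'
  set W3 := W2.reverse.takeUntil t htsup with hW3
  set W4 := W2.reverse.dropUntil t htsup with hW4
  have hsplit2 : W3.length + W4.length = W2.length := by
    rw [hW3, hW4, ← SimpleGraph.Walk.length_append, SimpleGraph.Walk.take_spec,
      SimpleGraph.Walk.length_reverse]
  have hW3pos : 1 ≤ W3.length := by
    by_contra h
    have : W3.length = 0 := by omega
    have := SimpleGraph.Walk.eq_of_length_eq_zero this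
    subst this
    exact hw.not_mem htF'
  have hW4len : δ ≤ W4.length := by
    have := hδ s hsF t htF' W4.reverse
    rwa [SimpleGraph.Walk.length_reverse] at this
  omega

variable (A) in
/-- A triangle with apex `u` of maximal generation. -/
def IsFace (u x y : A.Vert) : Prop :=
  A.adj u x ∧ A.adj u y ∧ A.adj x y ∧ A.gen x ≤ A.gen u ∧ A.gen y ≤ A.gen u

lemma exists_child {u x y : A.Vert} (h : A.IsFace u x y) :
    ∃ v, A.gen v = A.gen u + 1 ∧ A.low v = ({u, x, y} : Set A.Vert) := by
  obtain ⟨h1, h2, h3, h4, h5⟩ := h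
  have hxy : x ≠ y := fun he => A.adj_irrefl x (he ▸ h3)
  obtain ⟨v, ⟨hv1, hv2⟩, -⟩ :=
    A.attach (A.gen u) (A.gen_pos u) u x y rfl h4 h5 hxy h1 h2 h3
  refine ⟨v, hv1, ?_⟩
  rw [← hv2]
  ext w
  simp only [low, Set.mem_setOf_eq, hv1, Nat.lt_succ_iff]

lemma child_In {u x y v : A.Vert} (hv : A.low v = ({u, x, y} : Set A.Vert)) :
    A.In ({u, x, y} : Set A.Vert) v := In.base v hv

lemma In.mono {F F' : Set A.Vert} (hsub : ∀ f ∈ F', A.In F f) (hF' : F'.Nonempty) :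
    ∀ z, A.In F' z → A.In F z := by
  intro z hz
  induction hz with
  | base z h =>
      obtain ⟨f0, hf0⟩ := hF'
      refine In.step z f0 (by rw [h]; exact hf0) (hsub f0 hf0) ?_
      intro w' hw' _
      rw [h] at hw'
      exact hsub w' hw'
  | step z w hwl hwIn hall ih ih2 =>
      refine In.step z w hwl ih ?_
      intro w' hw' hw'F
      by_cases h : w' ∈ F'
      · exact hsub w' h
      · exact ih2 w' hw' h

/-- Interiors of two faces neither of which is inside the other are disjoint. -/
lemma In_disj {F F' : Set A.Vert}
    (hfa : ∃ f ∈ F, f ∉ F' ∧ ¬ A.In F' f)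
    (h2 : ∀ s ∈ F', ¬ A.In F s) (h3 : ∀ s ∈ F, ¬ A.In F' s) :
    ∀ z, A.In F z → ¬ A.In F' z := by
  have main : ∀ n z, A.gen z = n → A.In F z → ¬ A.In F' z := by
    intro n
    induction n using Nat.strong_induction_on with
    | _ n ih =>
      intro z hgz hzF hzF'
      cases hzF with
      | base z h =>
          cases hzF' with
          | base z h' =>
              obtain ⟨f, hf, hfn, -⟩ := hfa
              exact hfn ((h.symm.trans h') ▸ hf)
          | step z w hwl hwIn hall =>
              exact h3 w (by rw [← h]; exact hwl) hwIn
      | step z w hwl hwIn hall =>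
          rcases hzF'.low_subset w hwl with h' | h'
          · exact h2 w h' hwIn
          · have := hwl.2
            exact ih (A.gen w) (by omega) w rfl hwIn h'
  intro z; exact main (A.gen z) z rfl

lemma adj_of_low {v w : A.Vert} (h : w ∈ A.low v) : A.adj v w := h.1

lemma face_descend {u x y : A.Vert} (h : A.IsFace u x y) :
    ∃ u' x' y', A.IsFace u' x' y' ∧
      A.gen u' ≤ A.gen u + 3 ∧ A.gen x' ≤ A.gen u + 3 ∧ A.gen y' ≤ A.gen u + 3 ∧
      A.In {u, x, y} u' ∧ A.In {u, x, y} x' ∧ A.In {u, x, y} y' := by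
  obtain ⟨hux, huy, hxy, hgx, hgy⟩ := h
  obtain ⟨c1, hg1, hl1⟩ := A.exists_child ⟨hux, huy, hxy, hgx, hgy⟩
  have hc1u : u ∈ A.low c1 := by rw [hl1]; left; rfl
  have hc1x : x ∈ A.low c1 := by rw [hl1]; right; left; rfl
  have hface2 : A.IsFace c1 u x :=
    ⟨hc1u.1, hc1x.1, hux, le_of_lt hc1u.2, le_of_lt hc1x.2⟩
  obtain ⟨c2, hg2, hl2⟩ := A.exists_child hface2
  have hc2c1 : c1 ∈ A.low c2 := by rw [hl2]; left; rfl
  have hc2u : u ∈ A.low c2 := by rw [hl2]; right; left; rfl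
  have hface3 : A.IsFace c2 c1 u :=
    ⟨hc2c1.1, hc2u.1, hc1u.1, le_of_lt hc2c1.2, le_of_lt hc2u.2⟩
  obtain ⟨c3, hg3, hl3⟩ := A.exists_child hface3
  have hc3c2 : c2 ∈ A.low c3 := by rw [hl3]; left; rfl
  have hc3c1 : c1 ∈ A.low c3 := by rw [hl3]; right; left; rfl
  have hIn1 : A.In {u, x, y} c1 := In.base c1 hl1
  have hIn2 : A.In {u, x, y} c2 := by
    refine In.step c2 c1 hc2c1 hIn1 ?_
    intro w' hw' hw'F
    rw [hl2] at hw'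
    rcases hw' with rfl | rfl | rfl
    · exact hIn1
    · exact absurd (by left; rfl) hw'F
    · exact absurd (by right; left; rfl) hw'F
  have hIn3 : A.In {u, x, y} c3 := by
    refine In.step c3 c2 hc3c2 hIn2 ?_
    intro w' hw' hw'F
    rw [hl3] at hw'
    rcases hw' with rfl | rfl | rfl
    · exact hIn2
    · exact hIn1
    · exact absurd (by left; rfl) hw'F
  exact ⟨c3, c2, c1,
    ⟨hc3c2.1, hc3c1.1, hc2c1.1, le_of_lt hc3c2.2, le_of_lt hc3c1.2⟩,
    by omega, by omega, by omega, hIn3, hIn2, hIn1⟩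

variable (A) in
/-- The two-deep-faces invariant used for the diameter lower bound. -/
def Good (m δ : ℕ) : Prop := ∃ u x y u' x' y' : A.Vert,
  A.IsFace u x y ∧ A.IsFace u' x' y' ∧
  A.gen u ≤ m ∧ A.gen x ≤ m ∧ A.gen y ≤ m ∧
  A.gen u' ≤ m ∧ A.gen x' ≤ m ∧ A.gen y' ≤ m ∧
  (∀ z, A.In {u, x, y} z → ¬ A.In {u', x', y'} z) ∧
  (∀ s ∈ ({u, x, y} : Set A.Vert), ¬ A.In {u', x', y'} s) ∧
  (∀ t ∈ ({u', x', y'} : Set A.Vert), ¬ A.In {u, x, y} t) ∧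
  (∀ s ∈ ({u, x, y} : Set A.Vert), ∀ t ∈ ({u', x', y'} : Set A.Vert),
    ∀ W : A.Amb.Walk s t, δ ≤ W.length)

lemma Good.mono {m δ : ℕ} (h : A.Good m δ) : A.Good (m + 1) δ := by
  obtain ⟨u, x, y, u', x', y', h1, h2, g1, g2, g3, g4, g5, g6, rest⟩ := h
  exact ⟨u, x, y, u', x', y', h1, h2, by omega, by omega, by omega, by omega,
    by omega, by omega, rest⟩

lemma Good.step {m δ : ℕ} (h : A.Good m δ) : A.Good (m + 3) (δ + 2) := by
  obtain ⟨u, x, y, u', x', y', hf, hf', g1, g2, g3, g4, g5, g6,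
    hdisj, hFF', hF'F, hdist⟩ := h
  obtain ⟨a1, a2, a3, hfa, ha1, ha2, ha3, hI1, hI2, hI3⟩ := A.face_descend hf
  obtain ⟨b1, b2, b3, hfb, hb1, hb2, hb3, hJ1, hJ2, hJ3⟩ := A.face_descend hf'
  set F : Set A.Vert := {u, x, y}
  set F' : Set A.Vert := {u', x', y'}
  have hFne : F.Nonempty := ⟨u, by left; rfl⟩
  have hF'ne : F'.Nonempty := ⟨u', by left; rfl⟩
  have hsubA : ∀ f ∈ ({a1, a2, a3} : Set A.Vert), A.In F f := by
    intro f hfm; rcases hfm with rfl | rfl | rfl <;> assumption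
  have hsubB : ∀ f ∈ ({b1, b2, b3} : Set A.Vert), A.In F' f := by
    intro f hfm; rcases hfm with rfl | rfl | rfl <;> assumption
  have hAne : ({a1, a2, a3} : Set A.Vert).Nonempty := ⟨a1, by left; rfl⟩
  have hBne : ({b1, b2, b3} : Set A.Vert).Nonempty := ⟨b1, by left; rfl⟩
  have hmonoA : ∀ z, A.In {a1, a2, a3} z → A.In F z := In.mono hsubA hAne
  have hmonoB : ∀ z, A.In {b1, b2, b3} z → A.In F' z := In.mono hsubB hBne
  refine ⟨a1, a2, a3, b1, b2, b3, hfa, hfb, by omega, by omega, by omega,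
    by omega, by omega, by omega, ?_, ?_, ?_, ?_⟩
  · intro z hz hz'
    exact hdisj z (hmonoA z hz) (hmonoB z hz')
  · intro s hs hs'
    exact hdisj s (hsubA s hs) (hmonoB s hs')
  · intro t ht ht'
    exact hdisj t (hmonoA t ht') (hsubB t ht)
  · intro s hs t ht W
    exact A.cross_length hFne hF'ne hdisj hFF' hdist (hsubA s hs) (hsubB t ht) W

lemma triple_eq {α : Type} {a b c x y z : α} (hab : a ≠ b) (hac : a ≠ c) (hbc : b ≠ c)
    (hxy : x ≠ y) (hxz : x ≠ z) (hyz : y ≠ z)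
    (hx : x ∈ ({a, b, c} : Set α)) (hy : y ∈ ({a, b, c} : Set α))
    (hz : z ∈ ({a, b, c} : Set α)) : ({x, y, z} : Set α) = {a, b, c} := by
  simp only [Set.mem_insert_iff, Set.mem_singleton_iff] at hx hy hz
  rcases hx with rfl | rfl | rfl <;> rcases hy with rfl | rfl | rfl <;>
    rcases hz with rfl | rfl | rfl <;>
    first
      | exact absurd rfl hxy
      | exact absurd rfl hxz
      | exact absurd rfl hyz
      | (ext t; simp only [Set.mem_insert_iff, Set.mem_singleton_iff]; try tauto)

lemma base_setup : ∃ a b c d : A.Vert,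
    A.gen a = 1 ∧ A.gen b = 1 ∧ A.gen c = 1 ∧ a ≠ b ∧ a ≠ c ∧ b ≠ c ∧
    A.adj a b ∧ A.adj a c ∧ A.adj b c ∧
    A.gen d = 2 ∧ A.low d = ({a, b, c} : Set A.Vert) ∧
    (∀ v, A.gen v = 1 → v ∈ ({a, b, c} : Set A.Vert)) ∧
    (∀ v, A.gen v = 2 → v = d) := by
  obtain ⟨a, b, c, hab, hac, hbc, hU⟩ := A.U1_card
  have hga : A.gen a = 1 := by
    have : a ∈ ({a, b, c} : Set A.Vert) := by left; rfl
    rw [← hU] at this; exact this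
  have hgb : A.gen b = 1 := by
    have : b ∈ ({a, b, c} : Set A.Vert) := by right; left; rfl
    rw [← hU] at this; exact this
  have hgc : A.gen c = 1 := by
    have : c ∈ ({a, b, c} : Set A.Vert) := by right; right; rfl
    rw [← hU] at this; exact this
  have hadjab : A.adj a b := A.U1_complete a b hga hgb hab
  have hadjac : A.adj a c := A.U1_complete a c hga hgc hac
  have hadjbc : A.adj b c := A.U1_complete b c hgb hgc hbc
  have hface : A.IsFace a b c := ⟨hadjab, hadjac, hadjbc, by omega, by omega⟩
  obtain ⟨d, hgd, hld⟩ := A.exists_child hface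
  rw [hga] at hgd
  have hmemU : ∀ v, A.gen v = 1 → v ∈ ({a, b, c} : Set A.Vert) := by
    intro v hv; rw [← hU]; exact hv
  refine ⟨a, b, c, d, hga, hgb, hgc, hab, hac, hbc, hadjab, hadjac, hadjbc,
    hgd, hld, hmemU, ?_⟩
  intro v hv
  obtain ⟨w, ⟨hw1, hw2⟩, hwuniq⟩ :=
    A.attach 1 le_rfl a b c hga (by omega) (by omega) hbc hadjab hadjac hadjbc
  have key : ∀ v', A.gen v' = 2 → A.low v' = ({a, b, c} : Set A.Vert) → v' = w := by
    intro v' hg hl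
    refine hwuniq v' ⟨hg, ?_⟩
    rw [← hl]
    ext t
    simp only [low, Set.mem_setOf_eq, hg]
    constructor <;> rintro ⟨ha, hb⟩ <;> exact ⟨ha, by omega⟩
  have hdw : d = w := key d hgd hld
  obtain ⟨u1, x1, y1, hu1, hx1, hy1, h1, h2, h3, hl1⟩ := A.created' v (by omega)
  rw [hv] at hu1 hx1 hy1
  have hgu1 : A.gen u1 = 1 := by omega
  have hgx1 : A.gen x1 = 1 := by have := A.gen_pos x1; omega
  have hgy1 : A.gen y1 = 1 := by have := A.gen_pos y1; omega
  have hne1 : u1 ≠ x1 := fun he => A.adj_irrefl u1 (he ▸ h1)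
  have hne2 : u1 ≠ y1 := fun he => A.adj_irrefl u1 (he ▸ h2)
  have hne3 : x1 ≠ y1 := fun he => A.adj_irrefl x1 (he ▸ h3)
  have : ({u1, x1, y1} : Set A.Vert) = {a, b, c} :=
    triple_eq hab hac hbc hne1 hne2 hne3 (hmemU u1 hgu1) (hmemU x1 hgx1) (hmemU y1 hgy1)
  have := key v hv (hl1.trans this)
  rw [this, hdw]

lemma In_gen_big {u x y z : A.Vert} (h : A.In {u, x, y} z) : A.gen u < A.gen z :=
  h.gen_lt u (by left; rfl)

lemma length_ge_one {v w : A.Vert} (h : v ≠ w) (W : A.Amb.Walk v w) : 1 ≤ W.length := by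
  by_contra hc
  have hz : W.length = 0 := by omega
  exact h (SimpleGraph.Walk.eq_of_length_eq_zero hz)

lemma good_two : A.Good 2 0 := by
  obtain ⟨a, b, c, d, hga, hgb, hgc, hab, hac, hbc, hadjab, hadjac, hadjbc,
    hgd, hld, hmemU, huniq2⟩ := A.base_setup
  have hda : a ∈ A.low d := by rw [hld]; left; rfl
  have hdb : b ∈ A.low d := by rw [hld]; right; left; rfl
  have hdc : c ∈ A.low d := by rw [hld]; right; right; rfl
  refine ⟨d, a, b, d, b, c,
    ⟨hda.1, hdb.1, hadjab, by omega, by omega⟩,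
    ⟨hdb.1, hdc.1, hadjbc, by omega, by omega⟩,
    by omega, by omega, by omega, by omega, by omega, by omega, ?_, ?_, ?_, ?_⟩
  · refine A.In_disj ⟨a, by right; left; rfl, ?_, ?_⟩ ?_ ?_
    · intro hmem
      rcases hmem with h | h | h
      · exact hab (by rw [h] at hga; omega)  -- a = d : gen clash
      · exact hab h
      · exact hac h
    · intro hIn
      have := A.In_gen_big hIn
      omega
    · intro s hs hIn
      have := A.In_gen_big hIn
      rcases hs with rfl | rfl | rfl <;> omega
    · intro s hs hIn
      have := A.In_gen_big hIn
      rcases hs with rfl | rfl | rfl <;> omega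
  · intro s hs hIn
    have := A.In_gen_big hIn
    rcases hs with rfl | rfl | rfl <;> omega
  · intro t ht hIn
    have := A.In_gen_big hIn
    rcases ht with rfl | rfl | rfl <;> omega
  · intro s _ t _ W
    exact Nat.zero_le _

lemma good_three : A.Good 3 1 := by
  obtain ⟨a, b, c, d, hga, hgb, hgc, hab, hac, hbc, hadjab, hadjac, hadjbc,
    hgd, hld, hmemU, huniq2⟩ := A.base_setup
  have hda : a ∈ A.low d := by rw [hld]; left; rfl
  have hdb : b ∈ A.low d := by rw [hld]; right; left; rfl
  have hdc : c ∈ A.low d := by rw [hld]; right; right; rfl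
  obtain ⟨v1, hgv1, hlv1⟩ := A.exists_child
    (⟨hda.1, hdb.1, hadjab, by omega, by omega⟩ : A.IsFace d a b)
  obtain ⟨v2, hgv2, hlv2⟩ := A.exists_child
    (⟨hdb.1, hdc.1, hadjbc, by omega, by omega⟩ : A.IsFace d b c)
  rw [hgd] at hgv1 hgv2
  have hv1a : a ∈ A.low v1 := by rw [hlv1]; right; left; rfl
  have hv1b : b ∈ A.low v1 := by rw [hlv1]; right; right; rfl
  have hv2d : d ∈ A.low v2 := by rw [hlv2]; left; rfl
  have hv2c : c ∈ A.low v2 := by rw [hlv2]; right; right; rfl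
  have hv1v2 : v1 ≠ v2 := by
    intro he
    have : a ∈ A.low v2 := by rw [← he]; exact hv1a
    rw [hlv2] at this
    rcases this with h | h | h
    · rw [h] at hga; omega
    · exact hab h
    · exact hac h
  refine ⟨v1, a, b, v2, d, c,
    ⟨hv1a.1, hv1b.1, hadjab, by omega, by omega⟩,
    ⟨hv2d.1, hv2c.1, hdc.1, by omega, by omega⟩,
    by omega, by omega, by omega, by omega, by omega, by omega, ?_, ?_, ?_, ?_⟩
  · refine A.In_disj ⟨a, by right; left; rfl, ?_, ?_⟩ ?_ ?_
    · intro hmem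
      rcases hmem with h | h | h
      · rw [h] at hga; omega
      · rw [h] at hga; omega
      · exact hac h
    · intro hIn
      have := A.In_gen_big hIn
      omega
    · intro s hs hIn
      have := A.In_gen_big hIn
      rcases hs with rfl | rfl | rfl <;> omega
    · intro s hs hIn
      have := A.In_gen_big hIn
      rcases hs with rfl | rfl | rfl <;> omega
  · intro s hs hIn
    have := A.In_gen_big hIn
    rcases hs with rfl | rfl | rfl <;> omega
  · intro t ht hIn
    have := A.In_gen_big hIn
    rcases ht with rfl | rfl | rfl <;> omega
  · intro s hs t ht W
    refine A.length_ge_one ?_ W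
    rcases hs with rfl | rfl | rfl <;> rcases ht with rfl | rfl | rfl
    · exact hv1v2
    · intro h; rw [h] at hgv1; omega
    · intro h; rw [h] at hgv1; omega
    · intro h; rw [← h] at hgv2; omega
    · intro h; rw [h] at hga; omega
    · exact hac
    · intro h; rw [← h] at hgv2; omega
    · intro h; rw [h] at hgb; omega
    · exact hbc

lemma good_all : ∀ m, 2 ≤ m → A.Good m ((2 * m - 3) / 3) := by
  intro m
  induction m using Nat.strong_induction_on with
  | _ m ih =>
    intro hm
    rcases (by omega : m = 2 ∨ m = 3 ∨ m = 4 ∨ 5 ≤ m) with rfl | rfl | rfl | h5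
    · have : (2 * 2 - 3) / 3 = 0 := by norm_num
      rw [this]; exact A.good_two
    · have : (2 * 3 - 3) / 3 = 1 := by norm_num
      rw [this]; exact A.good_three
    · have : (2 * 4 - 3) / 3 = 1 := by norm_num
      rw [this]; exact Good.mono A.good_three
    · have h1 := (ih (m - 3) (by omega) (by omega)).step
      have e1 : m - 3 + 3 = m := by omega
      have e2 : (2 * (m - 3) - 3) / 3 + 2 = (2 * m - 3) / 3 := by omega
      rw [e1, e2] at h1
      exact h1

lemma lower_pair (k : ℕ) (hk : 3 ≤ k) : ∃ v w : A.Vert,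
    A.gen v ≤ k ∧ A.gen w ≤ k ∧
    ∀ W : A.Amb.Walk v w, (2 * k + 1) / 3 ≤ W.length := by
  obtain ⟨u, x, y, u', x', y', hf, hf', g1, g2, g3, g4, g5, g6,
    hdisj, hFF', hF'F, hdist⟩ := A.good_all (k - 1) (by omega)
  obtain ⟨v, hgv, hlv⟩ := A.exists_child hf
  obtain ⟨w, hgw, hlw⟩ := A.exists_child hf'
  have hvIn : A.In {u, x, y} v := In.base v hlv
  have hwIn : A.In {u', x', y'} w := In.base w hlw
  refine ⟨v, w, by omega, by omega, ?_⟩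
  intro W
  have := A.cross_length ⟨u, by left; rfl⟩ ⟨u', by left; rfl⟩ hdisj hFF' hdist hvIn hwIn W
  have e : (2 * (k - 1) - 3) / 3 + 2 = (2 * k + 1) / 3 := by omega
  omega

variable (A) in
/-- Forgetful homomorphism to the ambient graph. -/
def toAmb (k : ℕ) : A.G k →g A.Amb where
  toFun := Subtype.val
  map_rel' := fun h => h

variable (A) in
/-- Inclusion of `G k` into `G l`. -/
def liftG {k l : ℕ} (h : k ≤ l) : A.G k →g A.G l where
  toFun := fun v => ⟨v.1, v.2.trans h⟩
  map_rel' := fun hadj => hadj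

lemma edist_lift {k l : ℕ} (h : k ≤ l) (u v : {v : A.Vert // A.gen v ≤ k}) :
    (A.G l).edist (A.liftG h u) (A.liftG h v) ≤ (A.G k).edist u v := by
  rcases eq_or_ne ((A.G k).edist u v) ⊤ with he | he
  · rw [he]; exact le_top
  · obtain ⟨p, hp⟩ := SimpleGraph.exists_walk_of_edist_ne_top he
    calc (A.G l).edist (A.liftG h u) (A.liftG h v) ≤ (p.map (A.liftG h)).length := by
          exact_mod_cast SimpleGraph.edist_le _
      _ = ((A.G k).edist u v) := by rw [SimpleGraph.Walk.length_map, hp]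

lemma descend (k : ℕ) (hk : 1 ≤ k) (v : A.Vert) (hv : A.gen v ≤ k + 3) :
    ∃ v0, A.gen v0 ≤ k ∧ (v0 = v ∨ A.adj v v0) := by
  by_cases h : A.gen v ≤ k
  · exact ⟨v, h, Or.inl rfl⟩
  · have hv2 : 2 ≤ A.gen v := by omega
    obtain ⟨u, x, y, hu, hx, hy, hux, huy, hxy, hlow⟩ := A.created' v hv2
    have hvu : u ∈ A.low v := by rw [hlow]; left; rfl
    have hvx : x ∈ A.low v := by rw [hlow]; right; left; rfl
    have hvy : y ∈ A.low v := by rw [hlow]; right; right; rfl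
    rcases (by omega : A.gen v = k + 1 ∨ A.gen v = k + 2 ∨ A.gen v = k + 3)
      with h1 | h1 | h1
    · exact ⟨x, by omega, Or.inr hvx.1⟩
    · by_cases h2 : A.gen x ≤ k
      · exact ⟨x, h2, Or.inr hvx.1⟩
      · have : A.gen x = A.gen u := by omega
        have := A.adj_gen u x hux this.symm
        omega
    · have hxlt : A.gen x ≤ k + 1 := by
        by_contra hc
        have : A.gen x = A.gen u := by omega
        have := A.adj_gen u x hux this.symm
        omega
      have hylt : A.gen y ≤ k + 1 := by
        by_contra hc
        have : A.gen y = A.gen u := by omega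
        have := A.adj_gen u y huy this.symm
        omega
      by_cases h2 : A.gen x ≤ k
      · exact ⟨x, h2, Or.inr hvx.1⟩
      by_cases h3 : A.gen y ≤ k
      · exact ⟨y, h3, Or.inr hvy.1⟩
      · have : A.gen x = A.gen y := by omega
        have := A.adj_gen x y hxy this
        omega

lemma edist_le_one {k : ℕ} {u v : {v : A.Vert // A.gen v ≤ k}}
    (h : u = v ∨ (A.G k).Adj u v) : (A.G k).edist u v ≤ 1 := by
  rcases h with rfl | h
  · simp [SimpleGraph.edist_self]
  · rw [SimpleGraph.edist_eq_one_iff_adj.mpr h]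

lemma upper : ∀ k, 1 ≤ k → ∀ v w : {v : A.Vert // A.gen v ≤ k},
    (A.G k).edist v w ≤ (((2 * k + 1) / 3 : ℕ) : ℕ∞) := by
  intro k
  induction k using Nat.strong_induction_on with
  | _ k ih =>
    intro hk v w
    obtain ⟨a, b, c, d, hga, hgb, hgc, hab, hac, hbc, hadjab, hadjac, hadjbc,
      hgd, hld, hmemU, huniq2⟩ := A.base_setup
    have hadjd1 : ∀ t, A.gen t = 1 → A.adj d t := by
      intro t ht
      have : t ∈ A.low d := by rw [hld]; exact hmemU t ht
      exact this.1
    rcases (by omega : k = 1 ∨ k = 2 ∨ k = 3 ∨ 4 ≤ k) with rfl | rfl | rfl | h4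
    · have h1 : ((2 * 1 + 1) / 3 : ℕ) = 1 := by norm_num
      rw [h1]
      refine A.edist_le_one ?_
      rcases eq_or_ne v w with rfl | hne
      · exact Or.inl rfl
      · refine Or.inr (A.U1_complete v.1 w.1 ?_ ?_ ?_)
        · have := A.gen_pos v.1; have := v.2; omega
        · have := A.gen_pos w.1; have := w.2; omega
        · exact fun h => hne (Subtype.ext h)
    · have h1 : ((2 * 2 + 1) / 3 : ℕ) = 1 := by norm_num
      rw [h1]
      refine A.edist_le_one ?_
      rcases eq_or_ne v w with rfl | hne
      · exact Or.inl rfl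
      refine Or.inr ?_
      have hvw : v.1 ≠ w.1 := fun h => hne (Subtype.ext h)
      have hv2 := v.2
      have hw2 := w.2
      have hgenv := A.gen_pos v.1
      have hgenw := A.gen_pos w.1
      rcases (by omega : A.gen v.1 = 1 ∨ A.gen v.1 = 2) with h1 | h1 <;>
        rcases (by omega : A.gen w.1 = 1 ∨ A.gen w.1 = 2) with h2 | h2
      · exact A.U1_complete v.1 w.1 h1 h2 hvw
      · have := huniq2 w.1 h2
        subst this
        exact A.adj_symm _ _ (hadjd1 v.1 h1)
      · have := huniq2 v.1 h1
        subst this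
        exact hadjd1 w.1 h2
      · exact absurd ((huniq2 v.1 h1).trans (huniq2 w.1 h2).symm) hvw
    · have h1 : ((2 * 3 + 1) / 3 : ℕ) = 2 := by norm_num
      rw [h1]
      have hdd : A.gen d ≤ 3 := by omega
      set dd : {v : A.Vert // A.gen v ≤ 3} := ⟨d, hdd⟩ with hdddef
      have hub : ∀ z : {v : A.Vert // A.gen v ≤ 3}, z = dd ∨ (A.G 3).Adj z dd := by
        intro z
        have hz3 := z.2
        have hz1 := A.gen_pos z.1
        rcases (by omega : A.gen z.1 = 1 ∨ A.gen z.1 = 2 ∨ A.gen z.1 = 3)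
          with h | h | h
        · exact Or.inr (A.adj_symm _ _ (hadjd1 z.1 h))
        · exact Or.inl (Subtype.ext (huniq2 z.1 h))
        · obtain ⟨u, x, y, hu, hx, hy, hux, huy, hxy, hlow⟩ := A.created' z.1 (by omega)
          have : u ∈ A.low z.1 := by rw [hlow]; left; rfl
          have hud : u = d := huniq2 u (by omega)
          refine Or.inr ?_
          show A.adj z.1 d
          rw [← hud]
          exact this.1
      calc (A.G 3).edist v w ≤ (A.G 3).edist v dd + (A.G 3).edist dd w :=
            SimpleGraph.edist_triangle
        _ ≤ 1 + 1 := by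
            gcongr
            · exact A.edist_le_one (hub v)
            · refine A.edist_le_one ?_
              rcases hub w with h | h
              · exact Or.inl h.symm
              · exact Or.inr h.symm
        _ = 2 := by norm_num
    · -- inductive step
      have hk' : 1 ≤ k - 3 := by omega
      obtain ⟨v0, hv0k, hv0rel⟩ := A.descend (k - 3) hk' v.1 (by have := v.2; omega)
      obtain ⟨w0, hw0k, hw0rel⟩ := A.descend (k - 3) hk' w.1 (by have := w.2; omega)
      set v0' : {v : A.Vert // A.gen v ≤ k - 3} := ⟨v0, hv0k⟩
      set w0' : {v : A.Vert // A.gen v ≤ k - 3} := ⟨w0, hw0k⟩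
      have hlift := A.edist_lift (by omega : k - 3 ≤ k) v0' w0'
      have hmid := ih (k - 3) (by omega) hk' v0' w0'
      have hv0 : (A.G k).edist v (A.liftG (by omega : k - 3 ≤ k) v0') ≤ 1 := by
        refine A.edist_le_one ?_
        rcases hv0rel with h | h
        · exact Or.inl (Subtype.ext h.symm)
        · exact Or.inr h
      have hw0 : (A.G k).edist (A.liftG (by omega : k - 3 ≤ k) w0') w ≤ 1 := by
        refine A.edist_le_one ?_
        rcases hw0rel with h | h
        · exact Or.inl (Subtype.ext h)
        · exact Or.inr (A.adj_symm _ _ h)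
      calc (A.G k).edist v w
          ≤ (A.G k).edist v (A.liftG (by omega : k - 3 ≤ k) v0') +
            (A.G k).edist (A.liftG (by omega : k - 3 ≤ k) v0') w :=
            SimpleGraph.edist_triangle
        _ ≤ (A.G k).edist v (A.liftG (by omega : k - 3 ≤ k) v0') +
            ((A.G k).edist (A.liftG (by omega : k - 3 ≤ k) v0')
              (A.liftG (by omega : k - 3 ≤ k) w0') +
             (A.G k).edist (A.liftG (by omega : k - 3 ≤ k) w0') w) := by
            gcongr
            exact SimpleGraph.edist_triangle
        _ ≤ 1 + ((((2 * (k - 3) + 1) / 3 : ℕ) : ℕ∞) + 1) := by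
            gcongr
            exact hlift.trans hmid
        _ ≤ (((2 * k + 1) / 3 : ℕ) : ℕ∞) := by
            have harith : 1 + ((2 * (k - 3) + 1) / 3 + 1) = (2 * k + 1) / 3 := by omega
            rw [← harith]
            push_cast
            ring_nf
            exact le_refl _

lemma ediam_eq (k : ℕ) (hk : 1 ≤ k) :
    (A.G k).ediam = (((2 * k + 1) / 3 : ℕ) : ℕ∞) := by
  refine le_antisymm (SimpleGraph.ediam_le_of_edist_le (A.upper k hk)) ?_
  obtain ⟨a, b, c, d, hga, hgb, hgc, hab, hac, hbc, hadjab, hadjac, hadjbc,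
    hgd, hld, hmemU, huniq2⟩ := A.base_setup
  rcases (by omega : k = 1 ∨ k = 2 ∨ 3 ≤ k) with rfl | rfl | h3
  · have h1 : ((2 * 1 + 1) / 3 : ℕ) = 1 := by norm_num
    rw [h1]
    have hne : (⟨a, by omega⟩ : {v : A.Vert // A.gen v ≤ 1}) ≠ ⟨b, by omega⟩ := by
      intro h
      exact hab (congrArg Subtype.val h)
    calc (1 : ℕ∞) = ((1 : ℕ) : ℕ∞) := by norm_num
      _ ≤ (A.G 1).edist ⟨a, by omega⟩ ⟨b, by omega⟩ := by
          exact Order.one_le_iff_pos.mpr (SimpleGraph.edist_pos_of_ne hne)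
      _ ≤ (A.G 1).ediam := SimpleGraph.edist_le_ediam
  · have h1 : ((2 * 2 + 1) / 3 : ℕ) = 1 := by norm_num
    rw [h1]
    have hne : (⟨a, by omega⟩ : {v : A.Vert // A.gen v ≤ 2}) ≠ ⟨b, by omega⟩ := by
      intro h
      exact hab (congrArg Subtype.val h)
    calc (1 : ℕ∞) = ((1 : ℕ) : ℕ∞) := by norm_num
      _ ≤ (A.G 2).edist ⟨a, by omega⟩ ⟨b, by omega⟩ :=
          Order.one_le_iff_pos.mpr (SimpleGraph.edist_pos_of_ne hne)
      _ ≤ (A.G 2).ediam := SimpleGraph.edist_le_ediam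
  · obtain ⟨v, w, hv, hw, hlen⟩ := A.lower_pair k h3
    have key : (((2 * k + 1) / 3 : ℕ) : ℕ∞) ≤ (A.G k).edist ⟨v, hv⟩ ⟨w, hw⟩ := by
      rw [SimpleGraph.edist_eq_sInf]
      refine le_sInf ?_
      rintro b ⟨p, rfl⟩
      have := hlen (p.map (A.toAmb k))
      have hl : (p.map (A.toAmb k)).length = p.length := SimpleGraph.Walk.length_map _ _
      replace this := this.trans_eq hl
      show (((2 * k + 1) / 3 : ℕ) : ℕ∞) ≤ (p.length : ℕ∞)
      exact_mod_cast this
    exact key.trans SimpleGraph.edist_le_ediam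

theorem stmt19' (A : ApollonianNetwork) (k : ℕ) (hk : 1 ≤ k) :
    ((A.G k).diam : ℤ) = ⌈(2 * (k : ℚ) - 1) / 3⌉ := by
  have hdiam : (A.G k).diam = (2 * k + 1) / 3 := by
    rw [SimpleGraph.diam, A.ediam_eq k hk]
    simp
  obtain ⟨n, hn⟩ : ∃ n, (2 * k + 1) / 3 = n := ⟨_, rfl⟩
  rw [hdiam, hn, eq_comm, Int.ceil_eq_iff]
  have hN1 : 3 * n ≤ 2 * k + 1 := by omega
  have hN2 : 2 * k + 1 ≤ 3 * n + 2 := by omega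
  have h1 : ((3 * n : ℕ) : ℚ) ≤ ((2 * k + 1 : ℕ) : ℚ) := by exact_mod_cast hN1
  have h2 : ((2 * k + 1 : ℕ) : ℚ) ≤ ((3 * n + 2 : ℕ) : ℚ) := by exact_mod_cast hN2
  push_cast at h1 h2
  constructor
  · rw [lt_div_iff₀ (by norm_num : (0:ℚ) < 3)]
    push_cast
    linarith
  · rw [div_le_iff₀ (by norm_num : (0:ℚ) < 3)]
    push_cast
    linarith

end ApollonianNetwork

theorem stmt19 (A : ApollonianNetwork) (k : ℕ) (hk : 1 ≤ k) :
    ((A.G k).diam : ℤ) = ⌈(2 * (k : ℚ) - 1) / 3⌉ :=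
  ApollonianNetwork.stmt19' A k hk
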